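/- Let X be a topological space and δ : X → ℝ a continuous function. Fix real numbers t₀ < t₁ and set J = [t₀, t₁]. Let a, b : ℝ → ℝ be continuous on J with a(t) ≤ b(t) for all t ∈ J, and assume a and b are strictly increasing on J. Then the pair (B_J, A_J) deformation retracts onto (A_J ∪ B_{t₁}, A_J): there is a continuous map H : [0,1] × B_J → B_J such that H(0,p) = p for all p ∈ B_J, H(s,p) = p for every s ∈ [0,1] and every p ∈ A_J ∪ B_{t₁}, and H(1, B_J) ⊆ A_J ∪ B_{t₁}. -/

import Mathlib

lemma aux_inv {a : ℝ → ℝ} {t₀ t₁ : ℝ} (ht : t₀ ≤ t₁)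
    (ha : ContinuousOn a (Set.Icc t₀ t₁)) (hmono : StrictMonoOn a (Set.Icc t₀ t₁)) :
    ∃ g : ℝ → ℝ, Continuous g ∧ (∀ y, g y ∈ Set.Icc t₀ t₁) ∧
      (∀ y, a (g y) = max (a t₀) (min (a t₁) y)) := by
  have hmem : ∀ t ∈ Set.Icc t₀ t₁, a t ∈ Set.Icc (a t₀) (a t₁) := fun t ht' =>
    ⟨hmono.monotoneOn (Set.left_mem_Icc.2 ht) ht' ht'.1,
     hmono.monotoneOn ht' (Set.right_mem_Icc.2 ht) ht'.2⟩
  set f : Set.Icc t₀ t₁ → Set.Icc (a t₀) (a t₁) := fun t => ⟨a t, hmem t t.2⟩ with hf_def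
  have hf : StrictMono f := fun u v huv => by
    exact Subtype.mk_lt_mk.2 (hmono u.2 v.2 (Subtype.coe_lt_coe.2 huv))
  have hsurj : Function.Surjective f := by
    intro y
    obtain ⟨t, ht', h⟩ := intermediate_value_Icc ht ha y.2
    exact ⟨⟨t, ht'⟩, Subtype.ext h⟩
  set e := StrictMono.orderIsoOfSurjective f hf hsurj with he_def
  have hab : a t₀ ≤ a t₁ := (hmem t₀ (Set.left_mem_Icc.2 ht)).2
  refine ⟨fun y => (e.symm (Set.projIcc (a t₀) (a t₁) hab y) : ℝ), ?_, ?_, ?_⟩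
  · exact continuous_subtype_val.comp (e.toHomeomorph.symm.continuous.comp continuous_projIcc)
  · exact fun y => (e.symm _).2
  · intro y
    have : f (e.symm (Set.projIcc (a t₀) (a t₁) hab y)) = Set.projIcc (a t₀) (a t₁) hab y := by
      rw [← StrictMono.coe_orderIsoOfSurjective f hf hsurj, ← he_def]
      exact e.apply_symm_apply _
    have h2 := congrArg Subtype.val this
    simpa [hf_def, Set.projIcc] using h2

/-- If `a ≤ b` are strictly increasing on `J = [t₀,t₁]`, then the pair `(B_J, A_J)`
of slicewise sublevel sets deformation retracts onto `(A_J ∪ B_{t₁}, A_J)`. -/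
theorem stmt_5 {X : Type*} [TopologicalSpace X] (δ : X → ℝ) (hδ : Continuous δ)
    (t₀ t₁ : ℝ) (ht : t₀ < t₁)
    (a b : ℝ → ℝ)
    (ha : ContinuousOn a (Set.Icc t₀ t₁)) (hb : ContinuousOn b (Set.Icc t₀ t₁))
    (hab : ∀ t ∈ Set.Icc t₀ t₁, a t ≤ b t)
    (hamono : StrictMonoOn a (Set.Icc t₀ t₁))
    (hbmono : StrictMonoOn b (Set.Icc t₀ t₁)) :
    let AJ : Set (ℝ × X) := {p | p.1 ∈ Set.Icc t₀ t₁ ∧ δ p.2 ≤ a p.1}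
    let BJ : Set (ℝ × X) := {p | p.1 ∈ Set.Icc t₀ t₁ ∧ δ p.2 ≤ b p.1}
    let Bt₁ : Set (ℝ × X) := {p | p.1 = t₁ ∧ δ p.2 ≤ b t₁}
    ∃ H : ℝ × (ℝ × X) → ℝ × X,
      ContinuousOn H (Set.Icc (0:ℝ) 1 ×ˢ BJ) ∧
      (∀ s ∈ Set.Icc (0:ℝ) 1, ∀ p ∈ BJ, H (s, p) ∈ BJ) ∧
      (∀ p ∈ BJ, H (0, p) = p) ∧
      (∀ s ∈ Set.Icc (0:ℝ) 1, ∀ p ∈ AJ ∪ Bt₁, H (s, p) = p) ∧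
      (∀ p ∈ BJ, H (1, p) ∈ AJ ∪ Bt₁) := by
  intro AJ BJ Bt₁
  obtain ⟨g, hgc, hg_mem, hg_eq⟩ := aux_inv ht.le ha hamono
  -- key inequality: if y ≤ a t then g y ≤ t
  have L1 : ∀ t ∈ Set.Icc t₀ t₁, ∀ y : ℝ, y ≤ a t → g y ≤ t := by
    intro t ht' y hy
    have h1 : a t₀ ≤ a t := hamono.monotoneOn (Set.left_mem_Icc.2 ht.le) ht' ht'.1
    have h2 : a (g y) ≤ a t := by
      rw [hg_eq]
      exact max_le h1 (le_trans (min_le_right _ _) hy)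
    exact (hamono.le_iff_le (hg_mem y) ht').1 h2
  have L2 : ∀ y : ℝ, y ≤ a t₁ → y ≤ a (g y) := by
    intro y hy
    rw [hg_eq, min_eq_right hy]
    exact le_max_right _ _
  have L3 : ∀ y : ℝ, a t₁ < y → g y = t₁ := by
    intro y hy
    have h1 : a (g y) = a t₁ := by
      rw [hg_eq, min_eq_left hy.le,
        max_eq_right (hamono.monotoneOn (Set.left_mem_Icc.2 ht.le)
          (Set.right_mem_Icc.2 ht.le) ht.le)]
    exact hamono.injOn (hg_mem y) (Set.right_mem_Icc.2 ht.le) h1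
  refine ⟨fun q => ((1 - q.1) * q.2.1 + q.1 * max q.2.1 (g (δ q.2.2)), q.2.2), ?_, ?_, ?_, ?_, ?_⟩
  · apply Continuous.continuousOn
    fun_prop
  · rintro s ⟨hs0, hs1⟩ ⟨t, x⟩ ⟨ht', hx⟩
    set τ := max t (g (δ x)) with hτ
    have hτ1 : τ ≤ t₁ := max_le ht'.2 (hg_mem (δ x)).2
    have htτ : t ≤ τ := le_max_left _ _
    set u := (1 - s) * t + s * τ with hu
    have hu1 : t ≤ u := by nlinarith
    have hu2 : u ≤ τ := by nlinarith
    have huJ : u ∈ Set.Icc t₀ t₁ := ⟨le_trans ht'.1 hu1, le_trans hu2 hτ1⟩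
    exact ⟨huJ, le_trans hx (hbmono.monotoneOn ht' huJ hu1)⟩
  · rintro ⟨t, x⟩ _
    simp
  · rintro s ⟨hs0, hs1⟩ ⟨t, x⟩ hp
    have hgt : g (δ x) ≤ t := by
      rcases hp with ⟨ht', hx⟩ | ⟨ht', hx⟩
      · exact L1 t ht' _ hx
      · exact le_of_le_of_eq (hg_mem (δ x)).2 ht'.symm
    have : max t (g (δ x)) = t := max_eq_left hgt
    simp only [this]
    have : (1 - s) * t + s * t = t := by ring
    rw [this]
  · rintro ⟨t, x⟩ ⟨ht', hx⟩
    set τ := max t (g (δ x)) with hτ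
    have hτ1 : τ ≤ t₁ := max_le ht'.2 (hg_mem (δ x)).2
    have htτ : t ≤ τ := le_max_left _ _
    have hcoord : (1 - (1:ℝ)) * t + 1 * τ = τ := by ring
    simp only [← hτ, hcoord]
    rcases le_or_gt (δ x) (a t₁) with hy | hy
    · left
      refine ⟨⟨le_trans ht'.1 htτ, hτ1⟩, ?_⟩
      calc δ x ≤ a (g (δ x)) := L2 _ hy
        _ ≤ a τ := hamono.monotoneOn (hg_mem _) ⟨le_trans ht'.1 htτ, hτ1⟩ (le_max_right _ _)
    · right
      have hgτ : g (δ x) = t₁ := L3 _ hy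
      have : τ = t₁ := by rw [hτ, hgτ]; exact max_eq_right ht'.2
      exact ⟨this, le_trans hx (hbmono.monotoneOn ht' (Set.right_mem_Icc.2 ht.le) ht'.2)⟩
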